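/- Let G be a chain-connected anterial graph over a finite node set V and let C ⊆ V. Then the counterfactual graph φ(G;C) is a chain-connected anterial graph. -/

import Mathlib

open MeasureTheory

universe u v w

/-! ## Mixed graphs -/

/-- A mixed graph over a node set `V`: directed, undirected and bidirected edges.
The undirected and bidirected edge relations are read symmetrically. -/
structure MixedGraph (V : Type u) where
  dir : V → V → Prop
  undir : V → V → Prop
  bidir : V → V → Prop

namespace MixedGraph

variable {V : Type u} (G : MixedGraph V)

/-- The (symmetrised) undirected-edge relation: there is an undirected edge between `a` and `b`. -/
def Undir (a b : V) : Prop := G.undir a b ∨ G.undir b a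

/-- The (symmetrised) bidirected-edge relation. -/
def Bidir (a b : V) : Prop := G.bidir a b ∨ G.bidir b a

/-- Two nodes are adjacent if they are joined by an edge of any type. -/
def Adj (a b : V) : Prop := G.dir a b ∨ G.dir b a ∨ G.Undir a b ∨ G.Bidir a b

/-- One step of a semi-directed path: a directed edge `a → b` or an undirected edge. -/
def sdStep (a b : V) : Prop := G.dir a b ∨ G.Undir a b

/-- There is a semi-directed path (possibly trivial) from `a` to `b`. -/
def SemiDirReach (a b : V) : Prop := Relation.ReflTransGen G.sdStep a b

/-- The anterior of a node set `S`. -/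
def ant (S : Set V) : Set V := {x | x ∉ S ∧ ∃ i ∈ S, G.SemiDirReach x i}

/-- There is a semi-directed cycle in `G`. -/
def HasSemiDirCycle : Prop := ∃ a b, G.dir a b ∧ G.SemiDirReach b a

/-- A chain mixed graph: no semi-directed cycles. -/
def IsCMG : Prop := ¬ G.HasSemiDirCycle

/-- An anterial graph: a chain mixed graph in which no two nodes joined by a bidirected
edge are connected by a semi-directed path. -/
def IsAnterial : Prop := G.IsCMG ∧ ∀ a b, G.Bidir a b → ¬ G.SemiDirReach a b

/-- The chain component of a node `i`: all nodes connected to `i` by a sequence of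
undirected edges (including `i` itself). -/
def ChainComp (i : V) : Set V := {j | Relation.ReflTransGen G.Undir i j}

/-- Chain-connected: `i ↔ j` implies `i ↔ k` for every `k` in the chain component of `j`. -/
def ChainConnected : Prop := ∀ i j k : V, G.Bidir i j → k ∈ G.ChainComp j → G.Bidir i k

/-- The neighbours of a node. -/
def neSet (i : V) : Set V := {x | G.Undir x i}

/-- The parents of a node. -/
def paSet (i : V) : Set V := {x | G.dir x i}

lemma undir_symmetric : Symmetric G.Undir := fun _ _ h => h.elim Or.inr Or.inl

end MixedGraph

/-- The kind of an edge traversed on a walk, relative to the direction of travel. -/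
inductive EdgeKind : Type
  | dirR   -- directed edge pointing forwards
  | dirL   -- directed edge pointing backwards
  | undirE -- undirected edge
  | bidirE -- bidirected edge

/-- Whether an edge of the given kind joins `a` to `b` (in the direction of travel). -/
def MixedGraph.edgeHolds {V : Type u} (G : MixedGraph V) : EdgeKind → V → V → Prop
  | .dirR, a, b => G.dir a b
  | .dirL, a, b => G.dir b a
  | .undirE, a, b => G.Undir a b
  | .bidirE, a, b => G.Bidir a b

/-- A walk in a mixed graph: a sequence of nodes in which every pair of consecutive nodes
is joined by an edge (nodes and edges may repeat). -/
structure GWalk {V : Type u} (G : MixedGraph V) where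
  len : ℕ
  node : ℕ → V
  kind : ℕ → EdgeKind
  valid : ∀ k, k < len → G.edgeHolds (kind k) (node k) (node (k + 1))

namespace GWalk

variable {V : Type u} {G : MixedGraph V} (w : GWalk G)

/-- The nodes with indices in `[a, b]` form a section of the walk: a maximal subwalk
all of whose edges are undirected. -/
def IsSection (a b : ℕ) : Prop :=
  a ≤ b ∧ b ≤ w.len ∧ (∀ k, a ≤ k → k < b → w.kind k = EdgeKind.undirE) ∧
    (a = 0 ∨ w.kind (a - 1) ≠ EdgeKind.undirE) ∧ (b = w.len ∨ w.kind b ≠ EdgeKind.undirE)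

/-- A collider section: the two edges of the walk immediately adjacent to the section
both have an arrowhead at the section. -/
def IsColliderSection (a b : ℕ) : Prop :=
  w.IsSection a b ∧ 0 < a ∧ b < w.len ∧
    (w.kind (a - 1) = EdgeKind.dirR ∨ w.kind (a - 1) = EdgeKind.bidirE) ∧
    (w.kind b = EdgeKind.dirL ∨ w.kind b = EdgeKind.bidirE)

/-- The walk is connecting given `C`: every collider section contains a node of `C` and
every non-collider section contains no node of `C`. -/
def ConnectingGiven (C : Set V) : Prop :=
  ∀ a b : ℕ, w.IsSection a b →
    (w.IsColliderSection a b → ∃ m, a ≤ m ∧ m ≤ b ∧ w.node m ∈ C) ∧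
    (¬ w.IsColliderSection a b → ∀ m, a ≤ m → m ≤ b → w.node m ∉ C)

/-- A semi-directed walk: every edge is undirected or directed forwards. -/
def IsSemiDirected : Prop :=
  ∀ k, k < w.len → (w.kind k = EdgeKind.dirR ∨ w.kind k = EdgeKind.undirE)

end GWalk

/-- Graphical separation: `A ⊥_G B | C` holds if there is no connecting walk given `C`
between a node of `A` and a node of `B`. -/
def MixedGraph.Sep {V : Type u} (G : MixedGraph V) (A B C : Set V) : Prop :=
  ¬ ∃ w : GWalk G, w.node 0 ∈ A ∧ w.node w.len ∈ B ∧ w.ConnectingGiven C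

/-- A primitive inducing path between `i` and `j`. -/
def PrimitiveInducingPath {V : Type u} (G : MixedGraph V) (i j : V) : Prop :=
  ∃ w : GWalk G, 2 ≤ w.len ∧ w.node 0 = i ∧ w.node w.len = j ∧
    (∀ m, 0 < m → m < w.len → w.node m ∈ G.ant {i, j}) ∧
    (∀ k, 1 ≤ k → k + 1 < w.len → (w.kind k = EdgeKind.bidirE ∨ w.kind k = EdgeKind.undirE)) ∧
    (w.kind 0 = EdgeKind.bidirE ∨ w.kind 0 = EdgeKind.dirR) ∧
    (w.kind (w.len - 1) = EdgeKind.bidirE ∨ w.kind (w.len - 1) = EdgeKind.dirL)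

/-- A mixed graph is maximal if every pair of non-adjacent nodes can be separated by some set. -/
def IsMaximal {V : Type u} (G : MixedGraph V) : Prop :=
  ∀ i j : V, i ≠ j → ¬ G.Adj i j → ∃ C : Set V, i ∉ C ∧ j ∉ C ∧ G.Sep {i} {j} C

/-! ## Independence models -/

/-- Pairwise disjointness of three sets. -/
def Disjoint3 {V : Type u} (A B C : Set V) : Prop :=
  Disjoint A B ∧ Disjoint A C ∧ Disjoint B C

/-- A compositional graphoid: an independence model over `V` satisfying symmetry,
decomposition, weak union, contraction, intersection and composition. -/
structure IsCompositionalGraphoid {V : Type u} (J : Set V → Set V → Set V → Prop) : Prop where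
  symm : ∀ A B C : Set V, Disjoint3 A B C → J A B C → J B A C
  decomposition : ∀ A B C D : Set V, Disjoint3 A (B ∪ D) C → J A (B ∪ D) C → J A B C
  weakUnion : ∀ A B C D : Set V, Disjoint3 A (B ∪ D) C → J A (B ∪ D) C → J A B (C ∪ D)
  contraction : ∀ A B C D : Set V, Disjoint3 A B (C ∪ D) → Disjoint3 A D C →
    J A B (C ∪ D) → J A D C → J A (B ∪ D) C
  intersection : ∀ A B C D : Set V, Disjoint3 A B (C ∪ D) → Disjoint3 A D (C ∪ B) →
    J A B (C ∪ D) → J A D (C ∪ B) → J A (B ∪ D) C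
  composition : ∀ A B C D : Set V, Disjoint3 A B C → Disjoint3 A D C →
    J A B C → J A D C → J A (B ∪ D) C

/-- An independence model `J` is Markovian to a mixed graph `G` if every graphical
separation implies the corresponding independence statement. -/
def MarkovTo {V : Type u} (J : Set V → Set V → Set V → Prop) (G : MixedGraph V) : Prop :=
  ∀ A B C : Set V, Disjoint3 A B C → G.Sep A B C → J A B C

/-! ## Graphical interventions -/

/-- The intervened graph `do_C(G)`: for every `i ∈ C`, each undirected edge `i — j` with
`j ∉ C` is replaced by the directed edge `i → j`, undirected edges within `C` are removed,
all directed edges pointing into `i` are removed, and all bidirected edges incident to `i`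
are removed. -/
def doGraph {V : Type*} (G : MixedGraph V) (C : Set V) : MixedGraph V where
  dir i j := (G.dir i j ∧ j ∉ C) ∨ (G.Undir i j ∧ i ∈ C ∧ j ∉ C)
  undir i j := G.undir i j ∧ i ∉ C ∧ j ∉ C
  bidir i j := G.bidir i j ∧ i ∉ C ∧ j ∉ C

/-! ## Counterfactual graphs -/

/-- A node `i ∉ C` of `G` such that `ant(i) ∩ C = ∅` gets merged with its intervened copy
in the counterfactual graph; the intervened copy `i^{do(C)}` is kept exactly when
`CFKeep G C i` holds. -/
def CFKeep {V : Type*} (G : MixedGraph V) (C : Set V) (i : V) : Prop :=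
  i ∈ C ∨ (G.ant {i} ∩ C).Nonempty

/-- The node set of the counterfactual graph `φ(G; C)`: observational nodes `Sum.inl i`
(for all `i ∈ V`, with merged nodes represented by their observational copy) and
intervened nodes `Sum.inr i` for the kept nodes `i^{do(C)}`. -/
abbrev CFNode {V : Type*} (G : MixedGraph V) (C : Set V) : Type _ :=
  V ⊕ {i : V // CFKeep G C i}

/-- The extra bidirected edges of the counterfactual graph between a kept intervened node
`j^{do(C)}` (with `j ∉ C`) and an observational node `i`: `j^{do(C)} ↔ j`,
`j^{do(C)} ↔ i` for `i ↔ j` in `G`, and `j^{do(C)} ↔ i` for `i ∈ τ(j) \ {j}`. -/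
def crossBidir {V : Type*} (G : MixedGraph V) (C : Set V) (i jv : V) : Prop :=
  jv ∉ C ∧ (i = jv ∨ G.Bidir jv i ∨ (i ∈ G.ChainComp jv ∧ i ≠ jv))

/-- The counterfactual graph `φ(G; C)`: the disjoint union of `G` and of `do_C(G)` with
nodes relabelled, in which each intervened node `i^{do(C)}` with `i ∉ C` and
`ant_G(i) ∩ C = ∅` is merged into the observational node `i` (edges being rerouted
accordingly), and bidirected edges are added between kept intervened nodes `i^{do(C)}`
(`i ∉ C`) and the observational nodes `i`, the nodes `j` with `i ↔ j` in `G`, and the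
nodes `j ∈ τ_G(i) \ {i}`. -/
def phiGraph {V : Type*} (G : MixedGraph V) (C : Set V) : MixedGraph (CFNode G C) where
  dir u v :=
    match u, v with
    | .inl i, .inl j => G.dir i j ∨ (¬ CFKeep G C i ∧ ¬ CFKeep G C j ∧ (doGraph G C).dir i j)
    | .inl i, .inr j => ¬ CFKeep G C i ∧ (doGraph G C).dir i j.1
    | .inr i, .inl j => ¬ CFKeep G C j ∧ (doGraph G C).dir i.1 j
    | .inr i, .inr j => (doGraph G C).dir i.1 j.1
  undir u v :=
    match u, v with
    | .inl i, .inl j => G.undir i j ∨ (¬ CFKeep G C i ∧ ¬ CFKeep G C j ∧ (doGraph G C).undir i j)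
    | .inl i, .inr j => ¬ CFKeep G C i ∧ (doGraph G C).undir i j.1
    | .inr i, .inl j => ¬ CFKeep G C j ∧ (doGraph G C).undir i.1 j
    | .inr i, .inr j => (doGraph G C).undir i.1 j.1
  bidir u v :=
    match u, v with
    | .inl i, .inl j => G.bidir i j ∨ (¬ CFKeep G C i ∧ ¬ CFKeep G C j ∧ (doGraph G C).bidir i j)
    | .inl i, .inr j => (¬ CFKeep G C i ∧ (doGraph G C).bidir i j.1) ∨ crossBidir G C i j.1
    | .inr i, .inl j => (¬ CFKeep G C j ∧ (doGraph G C).bidir i.1 j) ∨ crossBidir G C j i.1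
    | .inr i, .inr j => (doGraph G C).bidir i.1 j.1


/-! ## Auxiliary lemmas for Statement 8 -/

section Statement8Aux

open Relation

variable {V : Type*} {G : MixedGraph V} {C : Set V}

lemma undir_symm' {a b : V} (h : G.Undir a b) : G.Undir b a := h.elim Or.inr Or.inl

lemma keep_step {i j : V} (h : G.sdStep i j) (hi : CFKeep G C i) : CFKeep G C j := by
  rcases hi with hi | ⟨x, ⟨⟨hxne, k, hk, hreach⟩, hxC⟩⟩
  · by_cases hij : i = j
    · exact Or.inl (hij ▸ hi)
    · exact Or.inr ⟨i, ⟨by simpa using hij, j, Set.mem_singleton j,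
        Relation.ReflTransGen.single h⟩, hi⟩
  · have hk' : k = i := Set.mem_singleton_iff.mp hk
    subst hk'
    have hxj : G.SemiDirReach x j := hreach.tail h
    by_cases hxj' : x = j
    · exact Or.inl (hxj' ▸ hxC)
    · exact Or.inr ⟨x, ⟨by simpa using hxj', j, Set.mem_singleton j, hxj⟩, hxC⟩

lemma keep_reach {i j : V} (h : G.SemiDirReach i j) (hi : CFKeep G C i) : CFKeep G C j := by
  induction h with
  | refl => exact hi
  | tail _ hstep ih => exact keep_step hstep ih

lemma notKeep_notC {i : V} (h : ¬ CFKeep G C i) : i ∉ C := fun hc => h (Or.inl hc)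

lemma do_step {i j : V} (h : (doGraph G C).sdStep i j) : G.sdStep i j := by
  rcases h with hd | hu
  · rcases hd with ⟨h, _⟩ | ⟨h, _⟩
    · exact Or.inl h
    · exact Or.inr h
  · rcases hu with ⟨h, _⟩ | ⟨h, _⟩
    · exact Or.inr (Or.inl h)
    · exact Or.inr (Or.inr h)

lemma do_undir_G {a b : V} (h : (doGraph G C).Undir a b) : G.Undir a b := by
  rcases h with ⟨h, _⟩ | ⟨h, _⟩
  · exact Or.inl h
  · exact Or.inr h

/-- The projection of the counterfactual nodes to `V`. -/
def cfProj (G : MixedGraph V) (C : Set V) : CFNode G C → V := Sum.elim id Subtype.val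

lemma phi_step_proj {u v : CFNode G C} (h : (phiGraph G C).sdStep u v) :
    G.sdStep (cfProj G C u) (cfProj G C v) := by
  rcases h with hd | hu
  · cases u with
    | inl i =>
      cases v with
      | inl j =>
        rcases hd with h | ⟨_, _, h⟩
        · exact Or.inl h
        · exact do_step (Or.inl h)
      | inr j => exact do_step (Or.inl hd.2)
    | inr i =>
      cases v with
      | inl j => exact do_step (Or.inl hd.2)
      | inr j => exact do_step (Or.inl hd)
  · cases u with
    | inl i =>
      cases v with
      | inl j =>
        rcases hu with (h | ⟨_, _, h, _⟩) | (h | ⟨_, _, h, _⟩)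
        · exact Or.inr (Or.inl h)
        · exact Or.inr (Or.inl h)
        · exact Or.inr (Or.inr h)
        · exact Or.inr (Or.inr h)
      | inr j =>
        rcases hu with ⟨_, h, _⟩ | ⟨_, h, _⟩
        · exact Or.inr (Or.inl h)
        · exact Or.inr (Or.inr h)
    | inr i =>
      cases v with
      | inl j =>
        rcases hu with ⟨_, h, _⟩ | ⟨_, h, _⟩
        · exact Or.inr (Or.inl h)
        · exact Or.inr (Or.inr h)
      | inr j =>
        rcases hu with ⟨h, _⟩ | ⟨h, _⟩
        · exact Or.inr (Or.inl h)
        · exact Or.inr (Or.inr h)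

lemma phi_reach_proj {u v : CFNode G C} (h : (phiGraph G C).SemiDirReach u v) :
    G.SemiDirReach (cfProj G C u) (cfProj G C v) :=
  h.lift (cfProj G C) (fun _ _ hs => phi_step_proj hs)

lemma no_step_inr_inl {i : {i : V // CFKeep G C i}} {j : V} :
    ¬ (phiGraph G C).sdStep (Sum.inr i) (Sum.inl j) := by
  rintro (hd | hu)
  · exact hd.1 (keep_step (do_step (Or.inl hd.2)) i.2)
  · rcases hu with ⟨hk, h, _⟩ | ⟨hk, h, _⟩
    · exact hk (keep_step (Or.inr (Or.inl h)) i.2)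
    · exact hk (keep_step (Or.inr (Or.inr h)) i.2)

lemma no_undir_inl_inr {i : V} {j : {i : V // CFKeep G C i}} :
    ¬ (phiGraph G C).Undir (Sum.inl i) (Sum.inr j) := by
  rintro (⟨hk, h, _⟩ | ⟨hk, h, _⟩)
  · exact hk (keep_step (Or.inr (Or.inr h)) j.2)
  · exact hk (keep_step (Or.inr (Or.inl h)) j.2)

lemma step_inr {i : {i : V // CFKeep G C i}} {w : CFNode G C}
    (h : (phiGraph G C).sdStep (Sum.inr i) w) :
    ∃ k, w = Sum.inr k ∧ (doGraph G C).sdStep i.1 k.1 := by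
  cases w with
  | inl j => exact absurd h no_step_inr_inl
  | inr k => exact ⟨k, rfl, h⟩

lemma reach_inr {i : {i : V // CFKeep G C i}} {w : CFNode G C}
    (h : (phiGraph G C).SemiDirReach (Sum.inr i) w) :
    ∃ k, w = Sum.inr k ∧ (doGraph G C).SemiDirReach i.1 k.1 := by
  induction h with
  | refl => exact ⟨i, rfl, Relation.ReflTransGen.refl⟩
  | tail _ hstep ih =>
    obtain ⟨k, rfl, hr⟩ := ih
    obtain ⟨m, rfl, hs⟩ := step_inr hstep
    exact ⟨m, rfl, hr.tail hs⟩

lemma step_kept_inl {i : V} (hi : CFKeep G C i) {w : CFNode G C}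
    (h : (phiGraph G C).sdStep (Sum.inl i) w) :
    ∃ k, w = Sum.inl k ∧ CFKeep G C k := by
  cases w with
  | inl j => exact ⟨j, rfl, keep_step (phi_step_proj h) hi⟩
  | inr j =>
    rcases h with hd | hu
    · exact absurd hi hd.1
    · exact absurd hu no_undir_inl_inr

lemma reach_kept_inl {i : V} (hi : CFKeep G C i) {w : CFNode G C}
    (h : (phiGraph G C).SemiDirReach (Sum.inl i) w) :
    ∃ k, w = Sum.inl k ∧ CFKeep G C k := by
  induction h with
  | refl => exact ⟨i, rfl, hi⟩
  | tail _ hstep ih =>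
    obtain ⟨k, rfl, hk⟩ := ih
    exact step_kept_inl hk hstep

lemma do_no_into_C {x i : V} (h : (doGraph G C).sdStep x i) : i ∉ C := by
  rcases h with hd | hu
  · rcases hd with ⟨_, h⟩ | ⟨_, _, h⟩
    · exact h
    · exact h
  · rcases hu with h | h
    · exact h.2.2
    · exact h.2.1

lemma do_reach_C {x i : V} (h : (doGraph G C).SemiDirReach x i) : i ∈ C → x = i := by
  induction h with
  | refl => exact fun _ => rfl
  | tail _ hstep _ => exact fun hC => absurd hC (do_no_into_C hstep)

lemma do_cmg (hant : G.IsAnterial) : (doGraph G C).IsCMG := by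
  rintro ⟨a, b, hdir, hreach⟩
  have hGr : G.SemiDirReach b a := Relation.ReflTransGen.mono (fun _ _ h => do_step h) _ _ hreach
  rcases hdir with ⟨h, _⟩ | ⟨h, hA, hB⟩
  · exact hant.1 ⟨a, b, h, hGr⟩
  · obtain rfl := do_reach_C hreach hA
    exact hB hA

lemma phi_cmg (hant : G.IsAnterial) : (phiGraph G C).IsCMG := by
  rintro ⟨u, v, hdir, hreach⟩
  have hGr := phi_reach_proj hreach
  cases u with
  | inl i =>
    cases v with
    | inl j =>
      rcases hdir with h | ⟨hki, _, hd⟩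
      · exact hant.1 ⟨i, j, h, hGr⟩
      · rcases hd with ⟨h, _⟩ | ⟨_, hC, _⟩
        · exact hant.1 ⟨i, j, h, hGr⟩
        · exact hki (Or.inl hC)
    | inr j =>
      obtain ⟨k, hk, -⟩ := reach_inr hreach
      exact Sum.inl_ne_inr hk
  | inr i =>
    cases v with
    | inl j => exact no_step_inr_inl (Or.inl hdir)
    | inr j =>
      obtain ⟨k, hk, hr⟩ := reach_inr hreach
      obtain rfl : i = k := Sum.inr_injective hk
      exact do_cmg hant ⟨i.1, j.1, hdir, hr⟩

lemma phi_bidir_ll {i j : V} (h : (phiGraph G C).Bidir (Sum.inl i) (Sum.inl j)) :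
    G.Bidir i j := by
  rcases h with (h | ⟨_, _, h, _⟩) | (h | ⟨_, _, h, _⟩)
  · exact Or.inl h
  · exact Or.inl h
  · exact Or.inr h
  · exact Or.inr h

lemma phi_bidir_rr {i j : {i : V // CFKeep G C i}}
    (h : (phiGraph G C).Bidir (Sum.inr i) (Sum.inr j)) : G.Bidir i.1 j.1 := by
  rcases h with ⟨h, _⟩ | ⟨h, _⟩
  · exact Or.inl h
  · exact Or.inr h

lemma phi_ant (hant : G.IsAnterial) :
    ∀ u v : CFNode G C, (phiGraph G C).Bidir u v → ¬ (phiGraph G C).SemiDirReach u v := by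
  intro u v hb hr
  have hGr := phi_reach_proj hr
  cases u with
  | inl i =>
    cases v with
    | inl j => exact hant.2 i j (phi_bidir_ll hb) hGr
    | inr j =>
      have hb' : (¬ CFKeep G C i ∧ G.Bidir i j.1) ∨ crossBidir G C i j.1 := by
        rcases hb with (⟨hk, h, _⟩ | hc) | (⟨hk, h, _⟩ | hc)
        · exact Or.inl ⟨hk, Or.inl h⟩
        · exact Or.inr hc
        · exact Or.inl ⟨hk, Or.inr h⟩
        · exact Or.inr hc
      rcases hb' with ⟨_, hB⟩ | ⟨hjC, hcases⟩
      · exact hant.2 i j.1 hB hGr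
      · rcases hcases with rfl | hB | ⟨hmem, hne⟩
        · obtain ⟨k, hk, -⟩ := reach_kept_inl j.2 hr
          exact Sum.inl_ne_inr (id hk.symm : Sum.inl k = Sum.inr j)
        · exact hant.2 i j.1 (hB.elim Or.inr Or.inl) hGr
        · have hreachji : G.SemiDirReach j.1 i := Relation.ReflTransGen.mono (fun _ _ h => Or.inr h) _ _ hmem
          have hki : CFKeep G C i := keep_reach hreachji j.2
          obtain ⟨k, hk, -⟩ := reach_kept_inl hki hr
          exact Sum.inl_ne_inr (id hk.symm : Sum.inl k = Sum.inr j)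
  | inr i =>
    cases v with
    | inl j =>
      obtain ⟨k, hk, -⟩ := reach_inr hr
      exact Sum.inl_ne_inr (hk : Sum.inl j = Sum.inr k)
    | inr j => exact hant.2 i.1 j.1 (phi_bidir_rr hb) hGr

lemma phi_undir_ll {i j : V} (h : (phiGraph G C).Undir (Sum.inl i) (Sum.inl j)) :
    G.Undir i j := by
  rcases h with (h | ⟨_, _, h, _⟩) | (h | ⟨_, _, h, _⟩)
  · exact Or.inl h
  · exact Or.inl h
  · exact Or.inr h
  · exact Or.inr h

lemma chaincomp_inl {j : V} {w : CFNode G C}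
    (h : w ∈ (phiGraph G C).ChainComp (Sum.inl j)) :
    ∃ k, w = Sum.inl k ∧ k ∈ G.ChainComp j := by
  induction h with
  | refl => exact ⟨j, rfl, Relation.ReflTransGen.refl⟩
  | @tail b c hsub hstep ih =>
    obtain ⟨k, rfl, hk⟩ := ih
    cases c with
    | inl m => exact ⟨m, rfl, hk.tail (phi_undir_ll hstep)⟩
    | inr m => exact absurd hstep no_undir_inl_inr

lemma chaincomp_inr {j : {i : V // CFKeep G C i}} {w : CFNode G C}
    (h : w ∈ (phiGraph G C).ChainComp (Sum.inr j)) :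
    ∃ k, w = Sum.inr k ∧ Relation.ReflTransGen (doGraph G C).Undir j.1 k.1 := by
  induction h with
  | refl => exact ⟨j, rfl, Relation.ReflTransGen.refl⟩
  | @tail b c hsub hstep ih =>
    obtain ⟨k, rfl, hk⟩ := ih
    cases c with
    | inl m =>
      have hm : (phiGraph G C).Undir (Sum.inl m) (Sum.inr k) := hstep.elim Or.inr Or.inl
      exact absurd hm no_undir_inl_inr
    | inr m => exact ⟨m, rfl, hk.tail hstep⟩

lemma do_chain_notC {a b : V} (h : Relation.ReflTransGen (doGraph G C).Undir a b)
    (ha : a ∉ C) : b ∉ C := by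
  induction h with
  | refl => exact ha
  | tail _ hstep _ =>
    rcases hstep with h | h
    · exact h.2.2
    · exact h.2.1

lemma Gchain_symm {i j : V} (h : i ∈ G.ChainComp j) : j ∈ G.ChainComp i :=
  (@Relation.ReflTransGen.symmetric _ _ ⟨G.undir_symmetric⟩).symm _ _ h

lemma phi_cc (hcc : G.ChainConnected) : (phiGraph G C).ChainConnected := by
  intro u v w hb hw
  cases v with
  | inl j =>
    obtain ⟨k, rfl, hk⟩ := chaincomp_inl hw
    cases u with
    | inl i =>
      have hB : G.Bidir i k := hcc i j k (phi_bidir_ll hb) hk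
      rcases hB with h | h
      · exact Or.inl (Or.inl h)
      · exact Or.inr (Or.inl h)
    | inr i =>
      have hb' : (¬ CFKeep G C j ∧ G.Bidir i.1 j ∧ i.1 ∉ C) ∨ crossBidir G C j i.1 := by
        rcases hb with (⟨hkj, h, hi, hj⟩ | hc) | (⟨hkj, h, hj, hi⟩ | hc)
        · exact Or.inl ⟨hkj, Or.inl h, hi⟩
        · exact Or.inr hc
        · exact Or.inl ⟨hkj, Or.inr h, hi⟩
        · exact Or.inr hc
      rcases hb' with ⟨hkj, hB, hiC⟩ | ⟨hiC, hcases⟩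
      · have hkreach : G.SemiDirReach k j := Relation.ReflTransGen.mono (fun _ _ h => Or.inr h) _ _ (Gchain_symm hk)
        have hkk : ¬ CFKeep G C k := fun h => hkj (keep_reach hkreach h)
        have hkC : k ∉ C := notKeep_notC hkk
        rcases hcc i.1 j k hB hk with h | h
        · exact Or.inl (Or.inl ⟨hkk, h, hiC, hkC⟩)
        · exact Or.inr (Or.inl ⟨hkk, h, hkC, hiC⟩)
      · refine Or.inl (Or.inr ⟨hiC, ?_⟩)
        rcases hcases with heq | hB | ⟨hmem, hne⟩
        · by_cases hki : k = i.1
          · exact Or.inl hki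
          · exact Or.inr (Or.inr ⟨heq ▸ hk, hki⟩)
        · exact Or.inr (Or.inl (hcc i.1 j k hB hk))
        · by_cases hki : k = i.1
          · exact Or.inl hki
          · exact Or.inr (Or.inr ⟨hmem.trans hk, hki⟩)
  | inr j =>
    obtain ⟨k, rfl, hk⟩ := chaincomp_inr hw
    have hkG : k.1 ∈ G.ChainComp j.1 := Relation.ReflTransGen.mono (fun _ _ h => do_undir_G h) _ _ hk
    cases u with
    | inl i =>
      have hb' : (¬ CFKeep G C i ∧ G.Bidir i j.1 ∧ i ∉ C ∧ j.1 ∉ C) ∨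
          crossBidir G C i j.1 := by
        rcases hb with (⟨hki, h, hi, hj⟩ | hc) | (⟨hki, h, hj, hi⟩ | hc)
        · exact Or.inl ⟨hki, Or.inl h, hi, hj⟩
        · exact Or.inr hc
        · exact Or.inl ⟨hki, Or.inr h, hi, hj⟩
        · exact Or.inr hc
      rcases hb' with ⟨hki, hB, hiC, hjC⟩ | ⟨hjC, hcases⟩
      · have hkC : k.1 ∉ C := do_chain_notC hk hjC
        rcases hcc i j.1 k.1 hB hkG with h | h
        · exact Or.inl (Or.inl ⟨hki, h, hiC, hkC⟩)
        · exact Or.inr (Or.inl ⟨hki, h, hkC, hiC⟩)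
      · have hkC : k.1 ∉ C := do_chain_notC hk hjC
        refine Or.inl (Or.inr ⟨hkC, ?_⟩)
        rcases hcases with heq | hB | ⟨hmem, hne⟩
        · by_cases hik : i = k.1
          · exact Or.inl hik
          · exact Or.inr (Or.inr ⟨heq ▸ Gchain_symm hkG, hik⟩)
        · have : G.Bidir i j.1 := hB.elim Or.inr Or.inl
          have : G.Bidir i k.1 := hcc i j.1 k.1 this hkG
          exact Or.inr (Or.inl (this.elim Or.inr Or.inl))
        · by_cases hik : i = k.1
          · exact Or.inl hik
          · exact Or.inr (Or.inr ⟨(Gchain_symm hkG).trans hmem, hik⟩)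
    | inr i =>
      have hB : G.Bidir i.1 j.1 := phi_bidir_rr hb
      have hiC : i.1 ∉ C := by
        rcases hb with ⟨_, h, _⟩ | ⟨_, _, h⟩
        · exact h
        · exact h
      have hjC : j.1 ∉ C := by
        rcases hb with ⟨_, _, h⟩ | ⟨_, h, _⟩
        · exact h
        · exact h
      have hkC : k.1 ∉ C := do_chain_notC hk hjC
      rcases hcc i.1 j.1 k.1 hB hkG with h | h
      · exact Or.inl ⟨h, hiC, hkC⟩
      · exact Or.inr ⟨h, hkC, hiC⟩

end Statement8Aux

/-! ## Statement 8 -/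

/-- If `G` is a chain-connected anterial graph then so is the counterfactual graph
`φ(G; C)`. -/
theorem statement_8 {V : Type*} [Fintype V] (G : MixedGraph V)
    (hant : G.IsAnterial) (hcc : G.ChainConnected) (C : Set V) :
    (phiGraph G C).IsAnterial ∧ (phiGraph G C).ChainConnected := by
  exact ⟨⟨phi_cmg hant, phi_ant hant⟩, phi_cc hcc⟩
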